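/- Let V be an additive abelian group, τ, σ, ρ : V → ℝ, and α, β, γ ∈ V shifts, with constants a(ξ,η) skew-symmetric. If for all x ∈ V and all pairs (ξ,η) ∈ {(α,β),(α,γ),(β,γ)} the relation a(ξ,η)·τ(x)·σ(x+ξ+η) = σ(x+ξ)τ(x+η) − τ(x+ξ)σ(x+η) holds, and τ is nowhere zero, then the Bäcklund-type identity a(α,β)·τ(x+γ)·σ(x+α+β) − a(α,γ)·τ(x+β)·σ(x+α+γ) + a(β,γ)·τ(x+α)·σ(x+β+γ) = 0 holds for all x ∈ V. -/
import Mathlib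

theorem sigma_backlund_identity
    {V : Type*} [AddCommGroup V]
    (τ σ : V → ℝ) (α β γ : V)
    (a : V → V → ℝ)
    (haskew : ∀ ξ η, a ξ η = - a η ξ)
    (hσ : ∀ ξ ∈ ({α, β, γ} : Set V), ∀ η ∈ ({α, β, γ} : Set V), ∀ x : V,
      a ξ η * τ x * σ (x + ξ + η) =
        σ (x + ξ) * τ (x + η) - τ (x + ξ) * σ (x + η))
    (hτ0 : ∀ x, τ x ≠ 0) :
    ∀ x : V,
      a α β * τ (x + γ) * σ (x + α + β)
      - a α γ * τ (x + β) * σ (x + α + γ)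
      + a β γ * τ (x + α) * σ (x + β + γ) = 0 := by
  intro x
  have hα : α ∈ ({α, β, γ} : Set V) := by simp
  have hβ : β ∈ ({α, β, γ} : Set V) := by simp
  have hγ : γ ∈ ({α, β, γ} : Set V) := by simp
  have h1 := hσ α hα β hβ x
  have h2 := hσ α hα γ hγ x
  have h3 := hσ β hβ γ hγ x
  have key : τ x *
      (a α β * τ (x + γ) * σ (x + α + β)
      - a α γ * τ (x + β) * σ (x + α + γ)
      + a β γ * τ (x + α) * σ (x + β + γ)) = 0 := by
    linear_combination τ (x + γ) * h1 - τ (x + β) * h2 + τ (x + α) * h3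
  exact (mul_eq_zero.mp key).resolve_left (hτ0 x)
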